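/- Let n ≥ 4 and let F_n be the fan graph on vertices v_1, …, v_n whose edges are the cycle v_1v_2⋯v_nv_1 together with the chords v_1v_j for 3 ≤ j ≤ n − 1. Then ε_Δ(F_n) = n − 3: duplicating each of the n − 3 chords yields a triangle decomposable multigraph, and no multiset of fewer than n − 3 duplicated edges of F_n yields a triangle decomposable multigraph. -/

import Mathlib

/-- A triangle on three distinct vertices, as a multiset of edges. -/
def IsTriangle {V : Type*} (t : Multiset (Sym2 V)) : Prop :=
  ∃ a b c : V, a ≠ b ∧ b ≠ c ∧ a ≠ c ∧ t = {s(a, b), s(b, c), s(a, c)}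

/-- A multigraph (multiset of edges) is triangle decomposable if it is a sum of triangles. -/
def TriDecomp {V : Type*} (E : Multiset (Sym2 V)) : Prop :=
  ∃ T : Multiset (Multiset (Sym2 V)), (∀ t ∈ T, IsTriangle t) ∧ T.sum = E

/-- The edge multiset of a simple graph on a finite vertex type. -/
noncomputable def edgeMS {V : Type*} [Fintype V] (G : SimpleGraph V) : Multiset (Sym2 V) :=
  G.edgeSet.toFinite.toFinset.val

/-- `ε_Δ(G)`: the least number of duplicated edges of `G` (a multiset of edges of `G`,
repetitions allowed) whose addition makes the edge multiset triangle decomposable. -/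
noncomputable def epsDelta {V : Type*} [Fintype V] (G : SimpleGraph V) : ℕ :=
  sInf {k | ∃ D : Multiset (Sym2 V), D.card = k ∧ (∀ e ∈ D, e ∈ G.edgeSet) ∧
    TriDecomp (edgeMS G + D)}

/-- The fan graph `F_n` on vertices `v_1, …, v_n` (here zero-indexed as `0, …, n-1`):
the cycle `v_1 v_2 ⋯ v_n v_1` together with the chords `v_1 v_j` for `3 ≤ j ≤ n - 1`
(zero-indexed: `s(0, j)` for `2 ≤ j ≤ n - 2`). -/
def fanGraph (n : ℕ) (hn : 4 ≤ n) : SimpleGraph (Fin n) :=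
  SimpleGraph.fromEdgeSet
    {e | (∃ i : ℕ, ∃ _h : i + 1 < n, e = s(⟨i, by omega⟩, ⟨i + 1, by omega⟩)) ∨
         e = s(⟨n - 1, by omega⟩, ⟨0, by omega⟩) ∨
         (∃ j : ℕ, ∃ _h1 : 2 ≤ j, ∃ _h2 : j ≤ n - 2, e = s(⟨0, by omega⟩, ⟨j, by omega⟩))}

open Fin.NatCast

def fe (n : ℕ) [NeZero n] (a b : ℕ) : Sym2 (Fin n) := s((a : Fin n), (b : Fin n))
def cycE (n : ℕ) [NeZero n] : Multiset (Sym2 (Fin n)) :=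
  (Multiset.range n).map (fun i => fe n i (i+1))
def chE (n : ℕ) [NeZero n] : Multiset (Sym2 (Fin n)) :=
  (Multiset.range (n-3)).map (fun i => fe n 0 (i+2))

lemma cast_mk {n : ℕ} [NeZero n] {a : ℕ} (h : a < n) : (a : Fin n) = ⟨a, h⟩ :=
  Fin.ext (Fin.val_cast_of_lt h)
lemma fe_eq {n : ℕ} [NeZero n] {a b : ℕ} (ha : a < n) (hb : b < n) :
    fe n a b = s(⟨a, ha⟩, ⟨b, hb⟩) := by rw [fe, cast_mk ha, cast_mk hb]
lemma fin_zero {n : ℕ} [NeZero n] (h : 0 < n) : (0 : Fin n) = ⟨0, h⟩ := Fin.ext rfl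

lemma fe_wrap {n : ℕ} [NeZero n] (h : 0 < n) (h1 : n - 1 < n) :
    fe n (n-1) (n-1+1) = s(⟨n-1, h1⟩, ⟨0, h⟩) := by
  have : n - 1 + 1 = n := by omega
  rw [fe, this, Fin.natCast_self, cast_mk h1, fin_zero h]

lemma fe_wrap' {n : ℕ} [NeZero n] (hn : 1 ≤ n) : fe n (n-1) (n-1+1) = fe n 0 (n-1) := by
  rw [fe, fe, show n-1+1 = n by omega, Fin.natCast_self, Nat.cast_zero, Sym2.eq_swap]

lemma mem_fan_edgeSet (n : ℕ) (hn : 4 ≤ n) [NeZero n] (e : Sym2 (Fin n)) :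
    e ∈ (fanGraph n hn).edgeSet ↔ e ∈ cycE n + chE n := by
  rw [fanGraph, SimpleGraph.edgeSet_fromEdgeSet]
  simp only [Multiset.mem_add, cycE, chE, Multiset.mem_map, Multiset.mem_range,
    Set.mem_diff, Set.mem_setOf_eq, Set.mem_singleton_iff]
  constructor
  · rintro ⟨(⟨i, h, rfl⟩ | rfl | ⟨j, h1, h2, rfl⟩), -⟩
    · exact Or.inl ⟨i, by omega, fe_eq (by omega) h⟩
    · exact Or.inl ⟨n-1, by omega, fe_wrap (by omega) (by omega)⟩
    · exact Or.inr ⟨j-2, by omega, by rw [show j-2+2 = j by omega, fe_eq (by omega) (by omega)]⟩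
  · rintro (⟨i, hi, rfl⟩ | ⟨i, hi, rfl⟩)
    · constructor
      · by_cases h : i + 1 < n
        · exact Or.inl ⟨i, h, fe_eq (by omega) h⟩
        · have hi1 : i = n - 1 := by omega
          subst hi1
          exact Or.inr (Or.inl (fe_wrap (by omega) (by omega)))
      · by_cases h : i + 1 < n
        · rw [fe_eq (by omega) h]
          simp only [Set.mem_setOf_eq, Sym2.mem_diagSet, Sym2.mk_isDiag_iff]
          intro hc
          simp only [Fin.mk.injEq] at hc
          omega
        · have hi1 : i = n - 1 := by omega
          subst hi1
          rw [fe_wrap (by omega) (by omega)]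
          simp only [Set.mem_setOf_eq, Sym2.mem_diagSet, Sym2.mk_isDiag_iff]
          intro hc
          simp only [Fin.mk.injEq] at hc
          omega
    · constructor
      · exact Or.inr (Or.inr ⟨i+2, by omega, by omega, fe_eq (by omega) (by omega)⟩)
      · rw [fe_eq (by omega) (show i+2 < n by omega)]
        simp only [Set.mem_setOf_eq, Sym2.mem_diagSet, Sym2.mk_isDiag_iff]
        intro hc
        simp only [Fin.mk.injEq] at hc
        omega

lemma fe_eq_fe_iff {n : ℕ} [NeZero n] {a b c d : ℕ} (ha : a < n) (hb : b < n)
    (hc : c < n) (hd : d < n) :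
    fe n a b = fe n c d ↔ (a = c ∧ b = d) ∨ (a = d ∧ b = c) := by
  rw [fe_eq ha hb, fe_eq hc hd, Sym2.eq_iff]
  constructor
  · rintro (⟨h1, h2⟩ | ⟨h1, h2⟩) <;>
      [left; right] <;> exact ⟨congrArg Fin.val h1, congrArg Fin.val h2⟩
  · rintro (⟨h1, h2⟩ | ⟨h1, h2⟩) <;> [left; right] <;> exact ⟨Fin.ext h1, Fin.ext h2⟩

lemma fe_mem_iff {n : ℕ} [NeZero n] {a b : ℕ} (ha : a < n) (hb : b < n) (x : Fin n) :
    x ∈ fe n a b ↔ x.val = a ∨ x.val = b := by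
  rw [fe_eq ha hb, Sym2.mem_iff]
  constructor
  · rintro (rfl | rfl) <;> simp
  · rintro (h | h) <;> [left; right] <;> exact Fin.ext h

lemma cyc_eq_iff {n : ℕ} (hn : 4 ≤ n) [NeZero n] {i j : ℕ} (hi : i < n) (hj : j < n) :
    fe n i (i+1) = fe n j (j+1) ↔ i = j := by
  constructor
  · intro h
    by_cases h1 : i + 1 < n
    · by_cases h2 : j + 1 < n
      · rcases (fe_eq_fe_iff hi h1 hj h2).1 h with ⟨ha, _⟩ | ⟨_, _⟩ <;> omega
      · have hj1 : j = n - 1 := by omega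
        subst hj1
        rw [fe_wrap' (by omega)] at h
        rcases (fe_eq_fe_iff hi h1 (by omega) hj).1 h with ⟨_, _⟩ | ⟨_, _⟩ <;> omega
    · have hi1 : i = n - 1 := by omega
      subst hi1
      by_cases h2 : j + 1 < n
      · rw [fe_wrap' (by omega)] at h
        rcases (fe_eq_fe_iff hj h2 (by omega) hi).1 h.symm with ⟨_, _⟩ | ⟨_, _⟩ <;> omega
      · omega
  · rintro rfl; rfl

lemma nodup_cycE {n : ℕ} (hn : 4 ≤ n) [NeZero n] : (cycE n).Nodup := by
  refine Multiset.Nodup.map_on ?_ (Multiset.nodup_range n)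
  intro i hi j hj h
  exact (cyc_eq_iff hn (Multiset.mem_range.1 hi) (Multiset.mem_range.1 hj)).1 h

lemma nodup_chE {n : ℕ} (hn : 4 ≤ n) [NeZero n] : (chE n).Nodup := by
  refine Multiset.Nodup.map_on ?_ (Multiset.nodup_range (n-3))
  intro i hi j hj h
  rw [Multiset.mem_range] at hi hj
  rcases (fe_eq_fe_iff (by omega) (by omega) (by omega) (by omega)).1 h with ⟨_,h2⟩|⟨h1,_⟩ <;> omega

lemma cyc_ne_ch {n : ℕ} (hn : 4 ≤ n) [NeZero n] {i j : ℕ} (hi : i < n) (hj : j < n - 3) :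
    fe n i (i+1) ≠ fe n 0 (j+2) := by
  intro h
  by_cases h1 : i + 1 < n
  · rcases (fe_eq_fe_iff hi h1 (by omega) (by omega)).1 h with ⟨_,_⟩|⟨_,_⟩ <;> omega
  · have hi1 : i = n - 1 := by omega
    subst hi1
    rw [fe_wrap' (by omega)] at h
    rcases (fe_eq_fe_iff (by omega) hi (by omega) (by omega)).1 h with ⟨_,_⟩|⟨_,_⟩ <;> omega

lemma nodup_fanE {n : ℕ} (hn : 4 ≤ n) [NeZero n] : (cycE n + chE n).Nodup := by
  rw [Multiset.nodup_add]
  refine ⟨nodup_cycE hn, nodup_chE hn, Multiset.disjoint_left.2 ?_⟩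
  intro e he1 he2
  rw [cycE, Multiset.mem_map] at he1
  rw [chE, Multiset.mem_map] at he2
  obtain ⟨i, hi, rfl⟩ := he1
  obtain ⟨j, hj, hj2⟩ := he2
  exact cyc_ne_ch hn (Multiset.mem_range.1 hi) (Multiset.mem_range.1 hj) hj2.symm

lemma edgeMS_fan (n : ℕ) (hn : 4 ≤ n) [NeZero n] :
    edgeMS (fanGraph n hn) = cycE n + chE n := by
  refine (Multiset.Nodup.ext ?_ (nodup_fanE hn)).2 ?_
  · exact Finset.nodup _
  · intro e
    rw [← mem_fan_edgeSet n hn e]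
    show e ∈ (Set.Finite.toFinset _) ↔ _
    rw [Set.Finite.mem_toFinset]

def triMS (n : ℕ) [NeZero n] (i : ℕ) : Multiset (Sym2 (Fin n)) :=
  {fe n 0 (i+1), fe n (i+1) (i+2), fe n 0 (i+2)}

lemma msrange_succ' (k : ℕ) : Multiset.range (k+1) = 0 ::ₘ (Multiset.range k).map (·+1) := by
  have := List.range_succ_eq_map (n := k)
  simp only [Multiset.range, this]
  rfl

lemma cycE_split {n : ℕ} (hn : 4 ≤ n) [NeZero n] :
    cycE n = fe n 0 1 ::ₘ fe n 0 (n-1) ::ₘ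
      (Multiset.range (n-2)).map (fun i => fe n (i+1) (i+2)) := by
  have h1 : Multiset.range n = (n-1) ::ₘ 0 ::ₘ (Multiset.range (n-2)).map (·+1) := by
    conv_lhs => rw [show n = (n-2)+1+1 by omega]
    rw [Multiset.range_succ, msrange_succ', show n-2+1 = n-1 by omega]
  rw [cycE, h1, Multiset.map_cons, Multiset.map_cons, Multiset.map_map,
    fe_wrap' (by omega), Multiset.cons_swap]
  rfl

lemma sum_tris (n : ℕ) [NeZero n] (m : ℕ) :
    ((Multiset.range (m+1)).map (triMS n)).sum =
      fe n 0 1 ::ₘ fe n 0 (m+2) ::ₘ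
        ((Multiset.range (m+1)).map (fun i => fe n (i+1) (i+2)) +
         ((Multiset.range m).map (fun i => fe n 0 (i+2)) +
          (Multiset.range m).map (fun i => fe n 0 (i+2)))) := by
  induction m with
  | zero =>
    simp [triMS, Multiset.range_succ]
    exact Multiset.cons_swap _ _ 0
  | succ k ih =>
    rw [Multiset.range_succ, Multiset.map_cons, Multiset.sum_cons, ih]
    simp only [Multiset.range_succ]
    simp only [triMS, Multiset.map_cons, Multiset.insert_eq_cons, show k+1+2 = k+3 from rfl,
      show k+1+1 = k+2 from rfl, ← Multiset.singleton_add, Multiset.map_add,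
      Multiset.map_singleton]
    abel

lemma fan_decomp (n : ℕ) (hn : 4 ≤ n) [NeZero n] :
    edgeMS (fanGraph n hn) + chE n = ((Multiset.range (n-2)).map (triMS n)).sum := by
  have hs := sum_tris n (n-3)
  rw [show n-3+1 = n-2 by omega, show n-3+2 = n-1 by omega] at hs
  rw [hs, edgeMS_fan n hn, cycE_split hn, chE]
  simp only [← Multiset.singleton_add]
  abel

lemma mem_edgeMS {V : Type*} [Fintype V] (G : SimpleGraph V) (e : Sym2 V) :
    e ∈ edgeMS G ↔ e ∈ G.edgeSet := by
  show e ∈ (Set.Finite.toFinset _) ↔ _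
  rw [Set.Finite.mem_toFinset]

lemma adj_fan {n : ℕ} {hn : 4 ≤ n} [NeZero n] {a b : Fin n}
    (h : (fanGraph n hn).Adj a b) (ha : a ≠ 0) (hb : b ≠ 0) :
    a.val = b.val + 1 ∨ b.val = a.val + 1 := by
  rw [fanGraph, SimpleGraph.fromEdgeSet_adj] at h
  obtain ⟨hmem, hne⟩ := h
  rcases hmem with ⟨i, hi, he⟩ | he | ⟨j, h1, h2, he⟩
  · rw [Sym2.eq_iff] at he
    rcases he with ⟨rfl, rfl⟩ | ⟨rfl, rfl⟩ <;> simp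
  · rw [Sym2.eq_iff] at he
    rcases he with ⟨_, rfl⟩ | ⟨rfl, _⟩
    · exact absurd (fin_zero (by omega)).symm hb
    · exact absurd (fin_zero (by omega)).symm ha
  · rw [Sym2.eq_iff] at he
    rcases he with ⟨rfl, _⟩ | ⟨_, rfl⟩
    · exact absurd (fin_zero (by omega)).symm ha
    · exact absurd (fin_zero (by omega)).symm hb

lemma tri_has_zero {n : ℕ} {hn : 4 ≤ n} [NeZero n] {a b c : Fin n}
    (hab : a ≠ b) (hbc : b ≠ c) (hac : a ≠ c)
    (h1 : (fanGraph n hn).Adj a b) (h2 : (fanGraph n hn).Adj b c)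
    (h3 : (fanGraph n hn).Adj a c) : a = 0 ∨ b = 0 ∨ c = 0 := by
  by_contra hcon
  push_neg at hcon
  obtain ⟨ha, hb, hc⟩ := hcon
  have d1 := adj_fan h1 ha hb
  have d2 := adj_fan h2 hb hc
  have d3 := adj_fan h3 ha hc
  have v1 : a.val ≠ b.val := fun h => hab (Fin.ext h)
  have v2 : b.val ≠ c.val := fun h => hbc (Fin.ext h)
  have v3 : a.val ≠ c.val := fun h => hac (Fin.ext h)
  omega

lemma countP_sum' {α : Type*} (p : α → Prop) [DecidablePred p] (T : Multiset (Multiset α)) :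
    T.sum.countP p = (T.map (fun t => t.countP p)).sum := by
  induction T using Multiset.induction with
  | empty => simp
  | cons a s ih => simp [Multiset.countP_add, ih]

lemma card_sum' {α : Type*} (T : Multiset (Multiset α)) :
    Multiset.card T.sum = (T.map (fun t => Multiset.card t)).sum := by
  induction T using Multiset.induction with
  | empty => simp
  | cons a s ih => simp [ih]

lemma countP_chE {n : ℕ} (hn : 4 ≤ n) [NeZero n] :
    (chE n).countP (fun e => (0:Fin n) ∈ e) = n - 3 := by
  have : (chE n).countP (fun e => (0:Fin n) ∈ e) = Multiset.card (chE n) := by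
    rw [Multiset.countP_eq_card]
    intro e he
    rw [chE, Multiset.mem_map] at he
    obtain ⟨i, hi, rfl⟩ := he
    rw [Multiset.mem_range] at hi
    exact (fe_mem_iff (by omega) (by omega) 0).2 (Or.inl rfl)
  rw [this, chE, Multiset.card_map, Multiset.card_range]

lemma countP_cycE {n : ℕ} (hn : 4 ≤ n) [NeZero n] :
    (cycE n).countP (fun e => (0:Fin n) ∈ e) = 2 := by
  rw [cycE_split hn, Multiset.countP_cons, Multiset.countP_cons]
  have hmid : ((Multiset.range (n-2)).map (fun i => fe n (i+1) (i+2))).countP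
      (fun e => (0:Fin n) ∈ e) = 0 := by
    rw [Multiset.countP_eq_zero]
    intro e he
    rw [Multiset.mem_map] at he
    obtain ⟨i, hi, rfl⟩ := he
    rw [Multiset.mem_range] at hi
    rw [fe_mem_iff (by omega) (by omega)]
    simp only [Fin.val_zero]
    omega
  have e1 : (0:Fin n) ∈ fe n 0 1 := (fe_mem_iff (by omega) (by omega) 0).2 (Or.inl (by simp))
  have e2 : (0:Fin n) ∈ fe n 0 (n-1) :=
    (fe_mem_iff (by omega) (by omega) 0).2 (Or.inl (by simp))
  rw [hmid, if_pos e1, if_pos e2]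

lemma card_fanE {n : ℕ} (hn : 4 ≤ n) [NeZero n] :
    Multiset.card (cycE n + chE n) = 2 * n - 3 := by
  rw [Multiset.card_add, cycE, chE, Multiset.card_map, Multiset.card_map,
    Multiset.card_range, Multiset.card_range]
  omega

lemma countP_single {α : Type*} (p : α → Prop) [DecidablePred p] (a : α) :
    ({a} : Multiset α).countP p = if p a then 1 else 0 := by
  rw [← Multiset.cons_zero a, Multiset.countP_cons]
  simp

lemma lower_bound (n : ℕ) (hn : 4 ≤ n) [NeZero n] (D : Multiset (Sym2 (Fin n)))
    (hD : ∀ e ∈ D, e ∈ (fanGraph n hn).edgeSet)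
    (h : TriDecomp (edgeMS (fanGraph n hn) + D)) : n - 3 ≤ Multiset.card D := by
  obtain ⟨T, hT, hsum⟩ := h
  have hmemE : ∀ e ∈ edgeMS (fanGraph n hn) + D, e ∈ (fanGraph n hn).edgeSet := by
    intro e he
    rcases Multiset.mem_add.1 he with h' | h'
    · exact (mem_edgeMS _ _).1 h'
    · exact hD e h'
  have key : ∀ t ∈ T, t.countP (fun e => (0:Fin n) ∈ e) = 2 ∧ Multiset.card t = 3 := by
    intro t ht
    obtain ⟨a, b, c, hab, hbc, hac, rfl⟩ := hT t ht
    have hadj : ∀ x y : Fin n, s(x,y) ∈ ({s(a,b), s(b,c), s(a,c)} : Multiset (Sym2 (Fin n))) →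
        (fanGraph n hn).Adj x y := by
      intro x y hxy
      have hm : s(x,y) ∈ T.sum :=
        Multiset.mem_of_le (Multiset.le_sum_of_mem ht) hxy
      rw [hsum] at hm
      exact (SimpleGraph.mem_edgeSet _).1 (hmemE _ hm)
    have h1 : (fanGraph n hn).Adj a b := hadj a b (by simp)
    have h2 : (fanGraph n hn).Adj b c := hadj b c (by simp)
    have h3 : (fanGraph n hn).Adj a c := hadj a c (by simp)
    have h0 := tri_has_zero hab hbc hac h1 h2 h3
    refine ⟨?_, rfl⟩
    rcases h0 with rfl | rfl | rfl
    · simp [Multiset.insert_eq_cons, Multiset.countP_cons, countP_single,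
        Sym2.mem_iff, hab, hac]
    · simp [Multiset.insert_eq_cons, Multiset.countP_cons, countP_single,
        Sym2.mem_iff, hab, Ne.symm hab, hbc]
    · simp [Multiset.insert_eq_cons, Multiset.countP_cons, countP_single,
        Sym2.mem_iff, Ne.symm hac, Ne.symm hbc]
  have h2t : T.sum.countP (fun e => (0:Fin n) ∈ e) = 2 * Multiset.card T := by
    rw [countP_sum', Multiset.map_congr rfl (fun t ht => (key t ht).1)]
    rw [show (fun _ : Multiset (Sym2 (Fin n)) => 2) = Function.const _ 2 from rfl,
      Multiset.map_const, Multiset.sum_replicate, smul_eq_mul, mul_comm]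
  have h3t : Multiset.card T.sum = 3 * Multiset.card T := by
    rw [card_sum', Multiset.map_congr rfl (fun t ht => (key t ht).2)]
    rw [show (fun _ : Multiset (Sym2 (Fin n)) => 3) = Function.const _ 3 from rfl,
      Multiset.map_const, Multiset.sum_replicate, smul_eq_mul, mul_comm]
  rw [hsum] at h2t h3t
  rw [Multiset.countP_add, edgeMS_fan n hn, Multiset.countP_add,
    countP_cycE hn, countP_chE hn] at h2t
  rw [Multiset.card_add, edgeMS_fan n hn, card_fanE hn] at h3t
  have hle : D.countP (fun e => (0:Fin n) ∈ e) ≤ Multiset.card D :=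
    Multiset.countP_le_card _ _
  omega


/-- `ε_Δ(F_n) = n - 3`: duplicating each of the `n - 3` chords of the fan graph yields a
triangle decomposable multigraph, and no multiset of fewer than `n - 3` duplicated edges
of `F_n` yields a triangle decomposable multigraph. -/
theorem epsDelta_fanGraph (n : ℕ) (hn : 4 ≤ n) :
    epsDelta (fanGraph n hn) = n - 3 ∧
    (∃ D : Multiset (Sym2 (Fin n)), D.Nodup ∧ D.card = n - 3 ∧
      (∀ e ∈ D, ∃ j : ℕ, ∃ _h1 : 2 ≤ j, ∃ _h2 : j ≤ n - 2,
        e = s(⟨0, by omega⟩, ⟨j, by omega⟩)) ∧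
      TriDecomp (edgeMS (fanGraph n hn) + D)) ∧
    (∀ D : Multiset (Sym2 (Fin n)), (∀ e ∈ D, e ∈ (fanGraph n hn).edgeSet) →
      D.card < n - 3 → ¬ TriDecomp (edgeMS (fanGraph n hn) + D)) := by
  haveI : NeZero n := ⟨by omega⟩
  have htri : ∀ t ∈ (Multiset.range (n-2)).map (triMS n), IsTriangle t := by
    intro t ht
    rw [Multiset.mem_map] at ht
    obtain ⟨i, hi, rfl⟩ := ht
    rw [Multiset.mem_range] at hi
    refine ⟨((0:ℕ) : Fin n), ((i+1:ℕ) : Fin n), ((i+2:ℕ) : Fin n), ?_, ?_, ?_, rfl⟩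
    · intro h
      have := congrArg Fin.val h
      rw [Fin.val_cast_of_lt (by omega), Fin.val_cast_of_lt (by omega)] at this
      omega
    · intro h
      have := congrArg Fin.val h
      rw [Fin.val_cast_of_lt (by omega), Fin.val_cast_of_lt (by omega)] at this
      omega
    · intro h
      have := congrArg Fin.val h
      rw [Fin.val_cast_of_lt (by omega), Fin.val_cast_of_lt (by omega)] at this
      omega
  have hdecomp : TriDecomp (edgeMS (fanGraph n hn) + chE n) :=
    ⟨_, htri, (fan_decomp n hn).symm⟩
  have hchE_sub : ∀ e ∈ chE n, e ∈ (fanGraph n hn).edgeSet := by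
    intro e he
    rw [mem_fan_edgeSet]
    exact Multiset.mem_add.2 (Or.inr he)
  have hcard : Multiset.card (chE n) = n - 3 := by
    rw [chE, Multiset.card_map, Multiset.card_range]
  have hmem : (n-3) ∈ {k | ∃ D : Multiset (Sym2 (Fin n)), Multiset.card D = k ∧
      (∀ e ∈ D, e ∈ (fanGraph n hn).edgeSet) ∧ TriDecomp (edgeMS (fanGraph n hn) + D)} :=
    ⟨chE n, hcard, hchE_sub, hdecomp⟩
  refine ⟨?_, ⟨chE n, nodup_chE hn, hcard, ?_, hdecomp⟩, ?_⟩
  · rw [epsDelta]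
    refine le_antisymm (Nat.sInf_le hmem) (le_csInf ⟨_, hmem⟩ ?_)
    rintro k ⟨D, rfl, hDE, hTD⟩
    exact lower_bound n hn D hDE hTD
  · intro e he
    rw [chE, Multiset.mem_map] at he
    obtain ⟨i, hi, rfl⟩ := he
    rw [Multiset.mem_range] at hi
    exact ⟨i+2, by omega, by omega, fe_eq (by omega) (by omega)⟩
  · intro D hDE hlt hTD
    have := lower_bound n hn D hDE hTD
    omega
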